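/- Let α ≥ β > 1, C₁ > C₂ > 0, and let h : [0,∞) → ℝ be a nonnegative absolutely continuous function satisfying h'(t) + C₁·min(h(t)^α, h(t)^β) ≤ C₂ for a.e. t > 0. If h(0) > (C₂/C₁)^{1/α}, then for all t ≥ 0, h(t) ≤ (C₂/C₁)^{1/α} + [ (h(0) − (C₂/C₁)^{1/α})^{1−β} + C₁ (C₂/C₁)^{(α−β)/(α−β+1)} (β−1) t ]^{1/(1−β)}. -/

import Mathlib

open MeasureTheory Set Filter
open scoped Topology

/-- superadditivity of rpow for exponent ≥ 1 -/
lemma rpow_superadd {x y p : ℝ} (hx : 0 ≤ x) (hy : 0 ≤ y) (hp : 1 ≤ p) :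
    x ^ p + y ^ p ≤ (x + y) ^ p := by
  have h := NNReal.add_rpow_le_rpow_add x.toNNReal y.toNNReal hp
  have h2 := NNReal.coe_le_coe.2 h
  push_cast at h2
  rwa [Real.coe_toNNReal x hx, Real.coe_toNNReal y hy] at h2

lemma key_scalar (α β : ℝ) (hβ : 1 < β) (hαβ : β ≤ α) {r : ℝ} (hr0 : 0 < r) (hr1 : r < 1)
    {x : ℝ} (hx : r ^ (1/α) ≤ x) :
    r ^ ((α - β) / (α - β + 1)) * (x - r ^ (1/α)) ^ β ≤ min (x ^ α) (x ^ β) - r := by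
  have hα1 : 1 < α := lt_of_lt_of_le hβ hαβ
  have hα0 : 0 < α := by linarith
  set ε := r ^ (1/α) with hεdef
  have hε0 : 0 < ε := Real.rpow_pos_of_pos hr0 _
  have hε1 : ε ≤ 1 := Real.rpow_le_one hr0.le hr1.le (by positivity)
  have hx0 : 0 < x := lt_of_lt_of_le hε0 hx
  have hεα : ε ^ α = r := by
    rw [hεdef, ← Real.rpow_mul hr0.le, one_div_mul_cancel hα0.ne', Real.rpow_one]
  have step1 : ε ^ (α - β) * x ^ β ≤ min (x ^ α) (x ^ β) := by
    rcases le_or_gt x 1 with hx1 | hx1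
    · have hmin : min (x ^ α) (x ^ β) = x ^ α :=
        min_eq_left (Real.rpow_le_rpow_of_exponent_ge hx0 hx1 hαβ)
      rw [hmin]
      have h1 : ε ^ (α - β) ≤ x ^ (α - β) :=
        Real.rpow_le_rpow hε0.le (le_trans hx le_rfl) (by linarith)
      calc ε ^ (α - β) * x ^ β ≤ x ^ (α - β) * x ^ β :=
            mul_le_mul_of_nonneg_right h1 (Real.rpow_nonneg hx0.le _)
        _ = x ^ α := by rw [← Real.rpow_add hx0]; ring_nf
    · have hmin : min (x ^ α) (x ^ β) = x ^ β :=
        min_eq_right (Real.rpow_le_rpow_of_exponent_le hx1.le hαβ)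
      rw [hmin]
      have h1 : ε ^ (α - β) ≤ 1 := Real.rpow_le_one hε0.le hε1 (by linarith)
      nlinarith [Real.rpow_pos_of_pos hx0 β]
  have step2 : (x - ε) ^ β + ε ^ β ≤ x ^ β := by
    have := rpow_superadd (sub_nonneg.2 hx) hε0.le hβ.le
    rwa [sub_add_cancel] at this
  have step3 : r ^ ((α - β) / (α - β + 1)) ≤ ε ^ (α - β) := by
    have hεr : ε ^ (α - β) = r ^ ((α - β) / α) := by
      rw [hεdef, ← Real.rpow_mul hr0.le]
      congr 1; field_simp
    rw [hεr]
    apply Real.rpow_le_rpow_of_exponent_ge hr0 hr1.le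
    have h1 : (0:ℝ) < α - β + 1 := by linarith
    rw [div_le_div_iff₀ hα0 h1]
    nlinarith
  have hεβ : ε ^ (α - β) * ε ^ β = r := by
    rw [← Real.rpow_add hε0, sub_add_cancel]; exact hεα
  have hc1 : r ^ ((α - β) / (α - β + 1)) * (x - ε) ^ β ≤ ε ^ (α - β) * (x - ε) ^ β :=
    mul_le_mul_of_nonneg_right step3 (Real.rpow_nonneg (sub_nonneg.2 hx) _)
  have hc2 : ε ^ (α - β) * (x - ε) ^ β ≤ ε ^ (α - β) * x ^ β - r := by
    have hnn : (0:ℝ) ≤ ε ^ (α - β) := Real.rpow_nonneg hε0.le _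
    nlinarith
  linarith

/-- Lemma 5.2(2), case `β > 1`: decay estimate when `C₁ > C₂ > 0` and
`h 0 > (C₂/C₁)^(1/α)`. -/
theorem stmt_4 (α β C₁ C₂ : ℝ) (hβ : 1 < β) (hαβ : β ≤ α)
    (hC₂ : 0 < C₂) (hC : C₂ < C₁)
    (h h' : ℝ → ℝ)
    (hnn : ∀ t : ℝ, 0 ≤ t → 0 ≤ h t)
    (hFTC : ∀ s t : ℝ, 0 ≤ s → s ≤ t → h t - h s = ∫ τ in s..t, h' τ)
    (hInt : ∀ s t : ℝ, 0 ≤ s → s ≤ t → IntervalIntegrable h' volume s t)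
    (hineq : ∀ᵐ t ∂(volume.restrict (Set.Ioi (0:ℝ))),
      h' t + C₁ * min (h t ^ α) (h t ^ β) ≤ C₂)
    (h0 : (C₂ / C₁) ^ (1 / α) < h 0) :
    ∀ t : ℝ, 0 ≤ t →
      h t ≤ (C₂ / C₁) ^ (1 / α) +
        ((h 0 - (C₂ / C₁) ^ (1 / α)) ^ (1 - β) +
          C₁ * (C₂ / C₁) ^ ((α - β) / (α - β + 1)) * (β - 1) * t) ^ (1 / (1 - β)) := by
  intro t₀ ht₀
  have hC₁ : 0 < C₁ := hC₂.trans hC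
  set r : ℝ := C₂ / C₁ with hrdef
  have hr0 : 0 < r := div_pos hC₂ hC₁
  have hr1 : r < 1 := (div_lt_one hC₁).2 hC
  have hα1 : 1 < α := lt_of_lt_of_le hβ hαβ
  have hα0 : 0 < α := by linarith
  set ε : ℝ := r ^ (1/α) with hεdef
  have hε0 : 0 < ε := Real.rpow_pos_of_pos hr0 _
  set θ : ℝ := (α - β) / (α - β + 1) with hθdef
  set K : ℝ := C₁ * r ^ θ with hKdef
  have hK0 : 0 < K := mul_pos hC₁ (Real.rpow_pos_of_pos hr0 _)
  set g0 : ℝ := h 0 - ε with hg0def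
  have hg0 : 0 < g0 := sub_pos.2 h0
  have hβ1 : (0:ℝ) < β - 1 := by linarith
  have h1β : (1:ℝ) - β ≠ 0 := by intro hcon; rw [sub_eq_zero] at hcon; linarith
  have hA0 : 0 < g0 ^ (1 - β) := Real.rpow_pos_of_pos hg0 _
  have hC₂r : C₂ = C₁ * r := by rw [hrdef]; field_simp
  -- continuity of h on Ici 0
  have hconth : ContinuousOn h (Ici 0) := by
    intro x hx
    have hx0 : (0:ℝ) ≤ x := hx
    have hI : IntervalIntegrable h' volume 0 (x+1) := hInt 0 (x+1) le_rfl (by linarith)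
    have hprim : ContinuousOn (fun y => ∫ t in (0:ℝ)..y, h' t) (Icc 0 (x+1)) := by
      have h2 := intervalIntegral.continuousOn_primitive_interval
        (a := (0:ℝ)) (b := x+1) (f := h') (μ := volume)
        (by rw [uIcc_of_le (by linarith : (0:ℝ) ≤ x+1)]
            exact (intervalIntegrable_iff_integrableOn_Icc_of_le (by linarith)).1 hI)
      rwa [uIcc_of_le (by linarith : (0:ℝ) ≤ x+1)] at h2
    have heq : ∀ y ∈ Icc (0:ℝ) (x+1), h 0 + ∫ t in (0:ℝ)..y, h' t = h y := by
      intro y hy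
      linarith [hFTC 0 y le_rfl hy.1]
    have hcc : ContinuousOn h (Icc 0 (x+1)) :=
      (continuousOn_const.add hprim).congr (fun y hy => (heq y hy).symm)
    have hmem : Icc (0:ℝ) (x+1) ∈ 𝓝[Ici 0] x := by
      have hset : Icc (0:ℝ) (x+1) = Ici 0 ∩ Iic (x+1) := by
        ext y; simp [mem_Icc, mem_Ici, mem_Iic]
      rw [hset]
      exact Filter.inter_mem self_mem_nhdsWithin
        (mem_nhdsWithin_of_mem_nhds (Iic_mem_nhds (by linarith)))
    exact (hcc x ⟨hx0, by linarith⟩).mono_of_mem_nhdsWithin hmem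
  -- the vector field G
  set G : ℝ → ℝ := fun y => C₂ - C₁ * min (y ^ α) (y ^ β) with hGdef
  have hGcont : Continuous G := by
    have hcα : Continuous fun y : ℝ => y ^ α := by
      rw [continuous_iff_continuousAt]
      exact fun y => Real.continuousAt_rpow_const y α (Or.inr hα0.le)
    have hcβ : Continuous fun y : ℝ => y ^ β := by
      rw [continuous_iff_continuousAt]
      exact fun y => Real.continuousAt_rpow_const y β (Or.inr (by linarith))
    exact continuous_const.sub (continuous_const.mul (hcα.min hcβ))
  have hGh : ContinuousOn (fun τ => G (h τ)) (Ici 0) := hGcont.comp_continuousOn hconth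
  -- integral inequality
  have hae : ∀ᵐ τ ∂(volume : Measure ℝ),
      τ ∈ Set.Ioi (0:ℝ) → h' τ + C₁ * min (h τ ^ α) (h τ ^ β) ≤ C₂ :=
    (ae_restrict_iff' measurableSet_Ioi).1 hineq
  have hGint : ∀ s t : ℝ, 0 ≤ s → s ≤ t →
      IntervalIntegrable (fun τ => G (h τ)) volume s t := by
    intro s t hs hst
    apply ContinuousOn.intervalIntegrable
    rw [uIcc_of_le hst]
    exact hGh.mono (fun y hy => le_trans hs hy.1)
  have hkey : ∀ s t : ℝ, 0 ≤ s → s ≤ t → h t - h s ≤ ∫ τ in s..t, G (h τ) := by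
    intro s t hs hst
    rw [hFTC s t hs hst]
    apply intervalIntegral.integral_mono_ae_restrict hst (hInt s t hs hst) (hGint s t hs hst)
    have h1 : ∀ᵐ τ ∂(volume.restrict (Icc s t)),
        τ ∈ Set.Ioi (0:ℝ) → h' τ + C₁ * min (h τ ^ α) (h τ ^ β) ≤ C₂ :=
      ae_restrict_of_ae hae
    have h2 : ∀ᵐ τ ∂(volume.restrict (Icc s t)), τ ∈ Icc s t :=
      ae_restrict_mem measurableSet_Icc
    have h3 : ∀ᵐ τ ∂(volume.restrict (Icc s t)), τ ≠ 0 := by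
      apply ae_restrict_of_ae
      have hset : {τ : ℝ | ¬ τ ≠ 0} = {0} := by ext y; simp
      rw [ae_iff, hset]
      exact measure_singleton 0
    filter_upwards [h1, h2, h3] with τ hineqτ hmem hne
    have hτpos : τ ∈ Set.Ioi (0:ℝ) :=
      lt_of_le_of_ne (le_trans hs hmem.1) (Ne.symm hne)
    have hh := hineqτ hτpos
    simp only [hGdef]
    linarith
  -- slope estimate for the fencing lemma
  have hf' : ∀ x ∈ Ico (0:ℝ) t₀, ∀ ρ, G (h x) < ρ →
      ∃ᶠ z in 𝓝[>] x, slope h x z < ρ := by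
    intro x hx ρ hρ
    obtain ⟨ρ', hρ'1, hρ'2⟩ := exists_between hρ
    have hcx : ContinuousWithinAt (fun τ => G (h τ)) (Ici x) x :=
      (hGh x hx.1).mono (Ici_subset_Ici.2 hx.1)
    have hev : ∀ᶠ τ in 𝓝[Ici x] x, G (h τ) < ρ' := hcx (Iio_mem_nhds hρ'1)
    obtain ⟨b', hb', hsub⟩ := mem_nhdsGE_iff_exists_Icc_subset.1 hev
    apply Filter.Eventually.frequently
    filter_upwards [Ioc_mem_nhdsGT_of_mem (Set.mem_Ico.2 ⟨le_rfl, hb'⟩)] with z hz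
    have hxz : x < z := hz.1
    have hineq2 : h z - h x ≤ ∫ τ in x..z, G (h τ) := hkey x z hx.1 hxz.le
    have hbound : ∫ τ in x..z, G (h τ) ≤ ρ' * (z - x) := by
      have hmono : ∫ τ in x..z, G (h τ) ≤ ∫ _τ in x..z, ρ' := by
        apply intervalIntegral.integral_mono_on hxz.le (hGint x z hx.1 hxz.le)
          intervalIntegrable_const
        intro τ hτ
        exact le_of_lt (hsub ⟨hτ.1, le_trans hτ.2 hz.2⟩)
      simpa [intervalIntegral.integral_const, smul_eq_mul, mul_comm] using hmono
    have hsl : slope h x z ≤ ρ' := by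
      rw [slope_def_field, div_le_iff₀ (by linarith)]
      linarith
    exact lt_of_le_of_lt hsl hρ'2
  have hfcont : ContinuousOn h (Icc 0 t₀) := hconth.mono Icc_subset_Ici_self
  -- comparison against the perturbed barrier
  have hcomp : ∀ δ : ℝ, δ ∈ Ioo (0:ℝ) 1 →
      h t₀ ≤ ε + (g0 ^ (1 - β) + (1 - δ) * K * (β - 1) * t₀) ^ (1/(1-β)) := by
    intro δ hδ
    set m : ℝ := (1 - δ) * K * (β - 1) with hmdef
    have hm0 : 0 < m := mul_pos (mul_pos (by linarith [hδ.2]) hK0) hβ1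
    set B : ℝ → ℝ := fun t => ε + (g0 ^ (1 - β) + m * t) ^ (1/(1-β)) with hBdef
    set B' : ℝ → ℝ := fun t => -((1 - δ) * K) * (B t - ε) ^ β with hB'def
    have hu0 : ∀ t : ℝ, 0 ≤ t → 0 < g0 ^ (1 - β) + m * t := by
      intro t ht
      have := mul_nonneg hm0.le ht
      linarith
    have hBsub : ∀ t : ℝ, B t - ε = (g0 ^ (1 - β) + m * t) ^ (1/(1-β)) := by
      intro t; simp [hBdef]
    have hBderiv : ∀ x ∈ Ico (0:ℝ) t₀, HasDerivWithinAt B (B' x) (Ici x) x := by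
      intro x hx
      have hux : 0 < g0 ^ (1 - β) + m * x := hu0 x hx.1
      have hdu : HasDerivAt (fun t : ℝ => g0 ^ (1 - β) + m * t) m x := by
        simpa using ((hasDerivAt_id x).const_mul m).const_add (g0 ^ (1-β))
      have hdr : HasDerivAt (fun y : ℝ => y ^ (1/(1-β)))
          ((1/(1-β)) * (g0 ^ (1 - β) + m * x) ^ (1/(1-β) - 1)) (g0 ^ (1 - β) + m * x) :=
        Real.hasDerivAt_rpow_const (Or.inl hux.ne')
      have hcomp2 := ((hdr.comp x hdu).const_add ε)
      have he1 : (1/(1-β)) * β = 1/(1-β) - 1 := by field_simp; ring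
      have he2 : ((g0 ^ (1 - β) + m * x) ^ (1/(1-β))) ^ β
          = (g0 ^ (1 - β) + m * x) ^ (1/(1-β) - 1) := by
        rw [← Real.rpow_mul hux.le, he1]
      have heqd : (1/(1-β)) * (g0 ^ (1 - β) + m * x) ^ (1/(1-β) - 1) * m = B' x := by
        rw [hB'def]
        simp only [hBsub, he2]
        generalize (g0 ^ (1 - β) + m * x) ^ (1/(1-β) - 1) = P
        rw [hmdef]
        field_simp
        ring
      rw [heqd] at hcomp2
      exact hcomp2.hasDerivWithinAt
    have hBcont : ContinuousOn B (Icc 0 t₀) := by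
      intro x hx
      apply ContinuousAt.continuousWithinAt
      have h1 : ContinuousAt (fun t : ℝ => g0 ^ (1 - β) + m * t) x := by fun_prop
      exact continuousAt_const.add (h1.rpow_const (Or.inl (hu0 x hx.1).ne'))
    have hB0 : h 0 ≤ B 0 := by
      have : B 0 = ε + g0 := by
        simp only [hBdef, mul_zero, add_zero]
        rw [← Real.rpow_mul hg0.le, mul_one_div_cancel h1β, Real.rpow_one]
      rw [this, hg0def]
      ring_nf
      exact le_rfl
    have hbound : ∀ x ∈ Ico (0:ℝ) t₀, h x = B x → G (h x) < B' x := by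
      intro x hx heq
      have hux : 0 < (g0 ^ (1 - β) + m * x) ^ (1/(1-β)) :=
        Real.rpow_pos_of_pos (hu0 x hx.1) _
      have hεlt : ε < h x := by
        rw [heq, hBdef]
        simp only []
        linarith [hux]
      have hks := key_scalar α β hβ hαβ hr0 hr1 (x := h x) hεlt.le
      have hG : G (h x) ≤ -(K * (h x - ε) ^ β) := by
        rw [← hθdef, ← hεdef] at hks
        have hmul := mul_le_mul_of_nonneg_left hks hC₁.le
        simp only [hGdef, hKdef]
        rw [hC₂r]
        nlinarith [hmul]
      have hcβpos : 0 < (h x - ε) ^ β := Real.rpow_pos_of_pos (by linarith) _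
      have hBx : B' x = -((1 - δ) * K) * (h x - ε) ^ β := by
        rw [hB'def, heq]
      rw [hBx]
      have hlt : (1 - δ) * K < K := by nlinarith [hδ.1, hK0]
      have := mul_lt_mul_of_pos_right hlt hcβpos
      linarith
    have hfin := image_le_of_liminf_slope_right_lt_deriv_boundary' hfcont hf' hB0 hBcont
      hBderiv hbound (right_mem_Icc.2 ht₀)
    simpa [hBdef, hmdef] using hfin
  -- take δ → 0⁺
  set F : ℝ → ℝ := fun δ => ε + (g0 ^ (1 - β) + (1 - δ) * K * (β - 1) * t₀) ^ (1/(1-β))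
    with hFdef
  have hbase0 : 0 < g0 ^ (1 - β) + (1 - (0:ℝ)) * K * (β - 1) * t₀ := by
    have := mul_nonneg (mul_nonneg (mul_nonneg (by norm_num : (0:ℝ) ≤ 1 - 0) hK0.le)
      hβ1.le) ht₀
    linarith
  have hFc : ContinuousAt F 0 := by
    have h1 : ContinuousAt (fun δ : ℝ => g0 ^ (1 - β) + (1 - δ) * K * (β - 1) * t₀) 0 := by
      fun_prop
    exact continuousAt_const.add (h1.rpow_const (Or.inl hbase0.ne'))
  have htend : Tendsto F (𝓝[>] (0:ℝ)) (𝓝 (F 0)) :=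
    (hFc.continuousWithinAt)
  have hev : ∀ᶠ δ in 𝓝[>] (0:ℝ), h t₀ ≤ F δ := by
    filter_upwards [Ioo_mem_nhdsGT_of_mem (Set.mem_Ico.2 ⟨le_rfl, zero_lt_one⟩)] with δ hδ
    exact hcomp δ hδ
  have hfinal : h t₀ ≤ F 0 := ge_of_tendsto htend hev
  have hF0 : F 0 = ε + (g0 ^ (1 - β) + K * (β - 1) * t₀) ^ (1/(1-β)) := by
    simp [hFdef]
  rw [hF0] at hfinal
  exact hfinal
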